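/- arXiv:2512.06545 — 3 statements merged into one kernel-verified Lean document; each statement's English description precedes it below -/
import Mathlib

section
/- There exist permutations σ₁, σ₂, σ₃ of {1, …, 28} such that σ₁ ∘ σ₂ ∘ σ₃ = id, the subgroup generated by σ₁, σ₂, σ₃ acts transitively on {1, …, 28}, and the multisets of orbit sizes of the cyclic groups generated by σ₁, σ₂, σ₃ are, respectively, {10,4,4,2,2,1,1,1,1,1,1}, {7,5,3,3,3,3,3,1}, and {11,10,3,1,1,1,1}. -/
/-- The number of orbits of the cyclic group generated by a permutation `σ`
(i.e., the number of cycles of `σ`, counting fixed points as cycles of length 1). -/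
noncomputable def cycleCount {α : Type*} [Finite α] (σ : Equiv.Perm α) : ℕ :=
  Nat.card (MulAction.orbitRel.Quotient (Subgroup.zpowers σ) α)

/-- The multiset of sizes of the orbits of the cyclic group generated by a permutation `σ`
(i.e., the cycle type of `σ`, with fixed points contributing parts equal to 1). -/
noncomputable def orbitSizes {α : Type*} [Finite α] (σ : Equiv.Perm α) : Multiset ℕ :=
  letI := Fintype.ofFinite (MulAction.orbitRel.Quotient (Subgroup.zpowers σ) α)
  (Finset.univ : Finset (MulAction.orbitRel.Quotient (Subgroup.zpowers σ) α)).val.map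
    fun q => Nat.card q.orbit

section Aux

variable {α : Type*} [Fintype α] [DecidableEq α]

/-- The size of the orbit of `x` under `⟨σ⟩` is the minimal period. -/
lemma card_orbit_zpowers_eq (σ : Equiv.Perm α) (x : α) {n : ℕ} (hn : 0 < n)
    (h1 : (σ ^ n) x = x) (h2 : ∀ m, m < n → 0 < m → (σ ^ m) x ≠ x) :
    Nat.card (MulAction.orbit (Subgroup.zpowers σ) x) = n := by
  have hper : Function.IsPeriodicPt (⇑σ) n x := by
    rwa [Function.IsPeriodicPt, Function.IsFixedPt, Equiv.Perm.iterate_eq_pow]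
  have hsmul : (σ • · : α → α) = ⇑σ := rfl
  have hmp : Function.minimalPeriod (σ • ·) x = n := by
    rw [hsmul]
    have hle : Function.minimalPeriod (⇑σ) x ≤ n := hper.minimalPeriod_le hn
    have hpos : 0 < Function.minimalPeriod (⇑σ) x := hper.minimalPeriod_pos hn
    rcases lt_or_eq_of_le hle with hlt | heq
    · exact absurd (by
        have := Function.iterate_minimalPeriod (f := ⇑σ) (x := x)
        rwa [Equiv.Perm.iterate_eq_pow] at this) (h2 _ hlt hpos)
    · exact heq
  rw [Nat.card_congr (MulAction.orbitZPowersEquiv σ x), hmp, Nat.card_zmod]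

lemma zero_not_mem_orbitSizes (σ : Equiv.Perm α) : 0 ∉ orbitSizes σ := by
  classical
  intro h
  rw [orbitSizes, Multiset.mem_map] at h
  obtain ⟨q, -, hq⟩ := h
  obtain ⟨x, rfl⟩ := q.exists_rep
  have horb : MulAction.orbitRel.Quotient.orbit
        (Quotient.mk'' x : MulAction.orbitRel.Quotient (Subgroup.zpowers σ) α)
      = MulAction.orbit (Subgroup.zpowers σ) x := MulAction.orbitRel.Quotient.orbit_mk x
  rw [show (Quotient.mk _ x : MulAction.orbitRel.Quotient (Subgroup.zpowers σ) α)
      = Quotient.mk'' x from rfl, horb] at hq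
  have : Nonempty (MulAction.orbit (Subgroup.zpowers σ) x) :=
    ⟨⟨x, MulAction.mem_orbit_self x⟩⟩
  exact (Nat.card_pos).ne' hq

lemma count_orbitSizes_mul (σ : Equiv.Perm α) (n : ℕ) :
    (orbitSizes σ).count n * n =
      (Finset.univ.filter
        fun x : α => Nat.card (MulAction.orbit (Subgroup.zpowers σ) x) = n).card := by
  classical
  letI : Fintype (MulAction.orbitRel.Quotient (Subgroup.zpowers σ) α) := Fintype.ofFinite _
  set f : MulAction.orbitRel.Quotient (Subgroup.zpowers σ) α → ℕ :=
    fun q => Nat.card (MulAction.orbitRel.Quotient.orbit q) with hf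
  set s : Finset α := Finset.univ.filter
    fun x : α => Nat.card (MulAction.orbit (Subgroup.zpowers σ) x) = n with hs
  set t : Finset (MulAction.orbitRel.Quotient (Subgroup.zpowers σ) α) :=
    Finset.univ.filter fun q => f q = n with ht
  have horb : ∀ x : α, f (Quotient.mk'' x) = Nat.card (MulAction.orbit (Subgroup.zpowers σ) x) :=
    fun x => by
      show Nat.card (MulAction.orbitRel.Quotient.orbit
        (Quotient.mk'' x : MulAction.orbitRel.Quotient (Subgroup.zpowers σ) α)) = _
      rw [MulAction.orbitRel.Quotient.orbit_mk x]
  have hcount : (orbitSizes σ).count n = t.card := by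
    rw [orbitSizes, Multiset.count_map, ht, Finset.card_def, Finset.filter_val]
    congr 1
    refine Multiset.filter_congr ?_
    intro q _
    exact eq_comm
  have hmem : ∀ x ∈ s, (Quotient.mk'' x : MulAction.orbitRel.Quotient (Subgroup.zpowers σ) α) ∈ t := by
    intro x hx
    rw [hs, Finset.mem_filter] at hx
    rw [ht, Finset.mem_filter]
    exact ⟨Finset.mem_univ _, by rw [horb]; exact hx.2⟩
  have hcardsum := Finset.card_eq_sum_card_fiberwise hmem
  have hfiber : ∀ q ∈ t, (s.filter fun x => (Quotient.mk'' x : MulAction.orbitRel.Quotient (Subgroup.zpowers σ) α) = q).card = n := by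
    intro q hq
    rw [ht, Finset.mem_filter] at hq
    have hsf : (s.filter fun x => (Quotient.mk'' x : MulAction.orbitRel.Quotient (Subgroup.zpowers σ) α) = q)
        = Finset.univ.filter fun x => (Quotient.mk'' x : MulAction.orbitRel.Quotient (Subgroup.zpowers σ) α) = q := by
      ext x
      simp only [hs, Finset.mem_filter, Finset.mem_univ, true_and, and_iff_right_iff_imp]
      intro hxq
      rw [← horb x, hxq]
      exact hq.2
    have hform : (Finset.univ.filter fun x => (Quotient.mk'' x : MulAction.orbitRel.Quotient (Subgroup.zpowers σ) α) = q) =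
        Finset.univ.filter fun x => x ∈ MulAction.orbitRel.Quotient.orbit q := by
      ext x
      simp only [Finset.mem_filter, Finset.mem_univ, true_and]
      exact (MulAction.orbitRel.Quotient.mem_orbit).symm
    rw [hsf, hform, ← hq.2, hf]
    show (Finset.univ.filter fun x => x ∈ MulAction.orbitRel.Quotient.orbit q).card
      = Nat.card (MulAction.orbitRel.Quotient.orbit q)
    rw [Nat.card_eq_fintype_card]
    exact (Fintype.card_subtype _).symm
  calc (orbitSizes σ).count n * n = ∑ _q ∈ t, n := by rw [hcount, Finset.sum_const, smul_eq_mul]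
    _ = s.card := by
        rw [hcardsum]
        exact (Finset.sum_congr rfl hfiber).symm

lemma count_bind_replicate (S : Multiset ℕ) (n : ℕ) :
    (S.bind fun k => Multiset.replicate k k).count n = S.count n * n := by
  induction S using Multiset.induction with
  | empty => simp
  | cons a S ih =>
    rw [Multiset.cons_bind, Multiset.count_add, ih, Multiset.count_cons,
      Multiset.count_replicate]
    rcases eq_or_ne n a with rfl | h
    · simp only [if_true]
      ring
    · simp only [if_neg (fun hh : a = n => h hh.symm), if_neg h, zero_add, mul_zero, add_zero]

/-- Main tool: identify `orbitSizes` from a pointwise orbit-size function. -/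
lemma orbitSizes_eq_of_fn (σ : Equiv.Perm α) (c : α → ℕ) (T : Multiset ℕ)
    (hc : ∀ x, Nat.card (MulAction.orbit (Subgroup.zpowers σ) x) = c x)
    (h0 : 0 ∉ T)
    (hT : (T.bind fun k => Multiset.replicate k k) = Finset.univ.val.map c) :
    orbitSizes σ = T := by
  classical
  ext n
  rcases Nat.eq_zero_or_pos n with rfl | hn
  · rw [Multiset.count_eq_zero_of_notMem (zero_not_mem_orbitSizes σ),
      Multiset.count_eq_zero_of_notMem h0]
  · have key : (orbitSizes σ).count n * n = T.count n * n := by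
      rw [count_orbitSizes_mul, ← count_bind_replicate _ n, hT, Multiset.count_map,
        Finset.card_def, Finset.filter_val]
      congr 1
      refine Multiset.filter_congr ?_
      intro x _
      rw [hc x]
      exact eq_comm
    exact Nat.eq_of_mul_eq_mul_right hn key

end Aux

def sigma1 : Equiv.Perm (Fin 28) :=
  ⟨![15, 13, 4, 12, 11, 7, 9, 16, 21, 6, 23, 10, 25, 22, 14, 0, 18, 17, 5, 1, 20, 2, 19, 3, 24, 8, 26, 27],
   ![15, 19, 21, 23, 2, 18, 9, 5, 25, 6, 11, 4, 3, 1, 14, 0, 7, 17, 16, 22, 20, 8, 13, 10, 24, 12, 26, 27],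
   by decide, by decide⟩

def sigma2 : Equiv.Perm (Fin 28) :=
  ⟨![15, 0, 3, 9, 17, 21, 26, 23, 5, 2, 27, 4, 14, 13, 16, 1, 7, 6, 11, 10, 25, 8, 18, 12, 20, 24, 22, 19],
   ![1, 15, 9, 2, 11, 8, 17, 16, 21, 3, 19, 18, 23, 13, 12, 0, 14, 4, 22, 27, 24, 5, 26, 7, 25, 20, 6, 10],
   by decide, by decide⟩

def sigma3 : Equiv.Perm (Fin 28) :=
  ⟨![0, 27, 5, 7, 9, 22, 3, 8, 20, 17, 18, 11, 2, 15, 12, 1, 16, 4, 14, 26, 24, 21, 13, 19, 25, 23, 6, 10],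
   ![0, 15, 12, 6, 17, 2, 26, 3, 7, 4, 27, 11, 14, 22, 18, 13, 16, 9, 10, 23, 8, 21, 5, 25, 20, 24, 19, 1],
   by decide, by decide⟩

def c1 : Fin 28 → ℕ :=
  ![2, 4, 10, 10, 10, 4, 2, 4, 10, 2, 10, 10, 10, 4, 1, 2, 4, 1, 4, 4, 1, 10, 4, 10, 1, 10, 1, 1]

def c2 : Fin 28 → ℕ :=
  ![3, 3, 3, 3, 7, 3, 7, 5, 3, 3, 3, 7, 5, 1, 5, 3, 5, 7, 7, 3, 3, 3, 7, 5, 3, 3, 7, 3]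

def c3 : Fin 28 → ℕ :=
  ![1, 11, 11, 10, 3, 11, 10, 10, 10, 3, 11, 1, 11, 11, 11, 11, 1, 3, 11, 10, 10, 1, 11, 10, 10, 10, 10, 11]

lemma hc_gen (σ : Equiv.Perm (Fin 28)) (c : Fin 28 → ℕ)
    (h : ∀ x, 0 < c x ∧ (σ ^ (c x)) x = x ∧ ∀ m, m < c x → 0 < m → (σ ^ m) x ≠ x) :
    ∀ x, Nat.card (MulAction.orbit (Subgroup.zpowers σ) x) = c x := fun x =>
  card_orbit_zpowers_eq σ x (h x).1 (h x).2.1 (h x).2.2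

/-- Realizability of the degree-28 branch-data triple
`[10, 4, 4, 2, 2, 1, 1, 1, 1, 1, 1]`, `[7, 5, 3, 3, 3, 3, 3, 1]`, `[11, 10, 3, 1, 1, 1, 1]`
by a transitive permutation triple with product the identity. -/
theorem realizable_triple_10 :
    ∃ σ₁ σ₂ σ₃ : Equiv.Perm (Fin 28),
      σ₁ * σ₂ * σ₃ = 1 ∧
      (∀ x y : Fin 28,
        ∃ g ∈ Subgroup.closure ({σ₁, σ₂, σ₃} : Set (Equiv.Perm (Fin 28))), g x = y) ∧
      orbitSizes σ₁ = ({10, 4, 4, 2, 2, 1, 1, 1, 1, 1, 1} : Multiset ℕ) ∧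
      orbitSizes σ₂ = ({7, 5, 3, 3, 3, 3, 3, 1} : Multiset ℕ) ∧
      orbitSizes σ₃ = ({11, 10, 3, 1, 1, 1, 1} : Multiset ℕ) := by
  refine ⟨sigma1, sigma2, sigma3, ?_, ?_, ?_, ?_, ?_⟩
  · apply Equiv.ext
    decide
  · -- transitivity
    set H := Subgroup.closure ({sigma1, sigma2, sigma3} : Set (Equiv.Perm (Fin 28))) with hH
    have m1 : sigma1 ∈ H := Subgroup.subset_closure (by simp)
    have m2 : sigma2 ∈ H := Subgroup.subset_closure (by simp)
    have h0 : ∀ y : Fin 28, ∃ g ∈ H, g 0 = y := by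
      intro y
      fin_cases y
      · exact ⟨(1 : Equiv.Perm (Fin 28)), one_mem _, by decide⟩
      · exact ⟨sigma2⁻¹, (inv_mem m2), by decide⟩
      · exact ⟨sigma2⁻¹ * sigma1 * sigma1 * sigma2 * sigma1⁻¹ * sigma2⁻¹, (mul_mem (mul_mem (mul_mem (mul_mem (mul_mem (inv_mem m2) m1) m1) m2) (inv_mem m1)) (inv_mem m2)), by decide⟩
      · exact ⟨sigma1 * sigma1 * sigma2 * sigma1⁻¹ * sigma2⁻¹, (mul_mem (mul_mem (mul_mem (mul_mem m1 m1) m2) (inv_mem m1)) (inv_mem m2)), by decide⟩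
      · exact ⟨sigma2 * sigma1⁻¹ * sigma2 * sigma1⁻¹ * sigma2⁻¹, (mul_mem (mul_mem (mul_mem (mul_mem m2 (inv_mem m1)) m2) (inv_mem m1)) (inv_mem m2)), by decide⟩
      · exact ⟨sigma1 * sigma2 * sigma1 * sigma1 * sigma2⁻¹, (mul_mem (mul_mem (mul_mem (mul_mem m1 m2) m1) m1) (inv_mem m2)), by decide⟩
      · exact ⟨sigma2⁻¹ * sigma2⁻¹ * sigma1 * sigma1 * sigma2⁻¹, (mul_mem (mul_mem (mul_mem (mul_mem (inv_mem m2) (inv_mem m2)) m1) m1) (inv_mem m2)), by decide⟩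
      · exact ⟨sigma2⁻¹ * sigma1 * sigma2 * sigma1⁻¹ * sigma2⁻¹, (mul_mem (mul_mem (mul_mem (mul_mem (inv_mem m2) m1) m2) (inv_mem m1)) (inv_mem m2)), by decide⟩
      · exact ⟨sigma2⁻¹ * sigma1 * sigma2 * sigma1 * sigma1 * sigma2⁻¹, (mul_mem (mul_mem (mul_mem (mul_mem (mul_mem (inv_mem m2) m1) m2) m1) m1) (inv_mem m2)), by decide⟩
      · exact ⟨sigma1 * sigma2⁻¹ * sigma2⁻¹ * sigma1 * sigma1 * sigma2⁻¹, (mul_mem (mul_mem (mul_mem (mul_mem (mul_mem m1 (inv_mem m2)) (inv_mem m2)) m1) m1) (inv_mem m2)), by decide⟩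
      · exact ⟨sigma2 * sigma1⁻¹ * sigma2⁻¹, (mul_mem (mul_mem m2 (inv_mem m1)) (inv_mem m2)), by decide⟩
      · exact ⟨sigma1⁻¹ * sigma2 * sigma1⁻¹ * sigma2⁻¹, (mul_mem (mul_mem (mul_mem (inv_mem m1) m2) (inv_mem m1)) (inv_mem m2)), by decide⟩
      · exact ⟨sigma2 * sigma1 * sigma2 * sigma1⁻¹ * sigma2⁻¹, (mul_mem (mul_mem (mul_mem (mul_mem m2 m1) m2) (inv_mem m1)) (inv_mem m2)), by decide⟩
      · exact ⟨sigma1 * sigma2⁻¹, (mul_mem m1 (inv_mem m2)), by decide⟩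
      · exact ⟨sigma2⁻¹ * sigma1⁻¹ * sigma2 * sigma1 * sigma1 * sigma2⁻¹, (mul_mem (mul_mem (mul_mem (mul_mem (mul_mem (inv_mem m2) (inv_mem m1)) m2) m1) m1) (inv_mem m2)), by decide⟩
      · exact ⟨sigma1, m1, by decide⟩
      · exact ⟨sigma1⁻¹ * sigma2 * sigma1 * sigma1 * sigma2⁻¹, (mul_mem (mul_mem (mul_mem (mul_mem (inv_mem m1) m2) m1) m1) (inv_mem m2)), by decide⟩
      · exact ⟨sigma2⁻¹ * sigma2⁻¹ * sigma2⁻¹ * sigma1 * sigma1 * sigma2⁻¹, (mul_mem (mul_mem (mul_mem (mul_mem (mul_mem (inv_mem m2) (inv_mem m2)) (inv_mem m2)) m1) m1) (inv_mem m2)), by decide⟩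
      · exact ⟨sigma2 * sigma1 * sigma1 * sigma2⁻¹, (mul_mem (mul_mem (mul_mem m2 m1) m1) (inv_mem m2)), by decide⟩
      · exact ⟨sigma1⁻¹ * sigma2⁻¹, (mul_mem (inv_mem m1) (inv_mem m2)), by decide⟩
      · exact ⟨sigma2⁻¹ * sigma1 * sigma2 * sigma1 * sigma2 * sigma1⁻¹ * sigma2⁻¹, (mul_mem (mul_mem (mul_mem (mul_mem (mul_mem (mul_mem (inv_mem m2) m1) m2) m1) m2) (inv_mem m1)) (inv_mem m2)), by decide⟩
      · exact ⟨sigma2 * sigma1 * sigma2 * sigma1 * sigma1 * sigma2⁻¹, (mul_mem (mul_mem (mul_mem (mul_mem (mul_mem m2 m1) m2) m1) m1) (inv_mem m2)), by decide⟩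
      · exact ⟨sigma1 * sigma1 * sigma2⁻¹, (mul_mem (mul_mem m1 m1) (inv_mem m2)), by decide⟩
      · exact ⟨sigma1 * sigma2 * sigma1⁻¹ * sigma2⁻¹, (mul_mem (mul_mem (mul_mem m1 m2) (inv_mem m1)) (inv_mem m2)), by decide⟩
      · exact ⟨sigma2 * sigma1 * sigma2 * sigma1 * sigma2 * sigma1⁻¹ * sigma2⁻¹, (mul_mem (mul_mem (mul_mem (mul_mem (mul_mem (mul_mem m2 m1) m2) m1) m2) (inv_mem m1)) (inv_mem m2)), by decide⟩
      · exact ⟨sigma1 * sigma2 * sigma1 * sigma2 * sigma1⁻¹ * sigma2⁻¹, (mul_mem (mul_mem (mul_mem (mul_mem (mul_mem m1 m2) m1) m2) (inv_mem m1)) (inv_mem m2)), by decide⟩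
      · exact ⟨sigma2⁻¹ * sigma1 * sigma1 * sigma2⁻¹, (mul_mem (mul_mem (mul_mem (inv_mem m2) m1) m1) (inv_mem m2)), by decide⟩
      · exact ⟨sigma2⁻¹ * sigma1⁻¹ * sigma2⁻¹, (mul_mem (mul_mem (inv_mem m2) (inv_mem m1)) (inv_mem m2)), by decide⟩

    intro x y
    obtain ⟨gx, hgxH, hgx⟩ := h0 x
    obtain ⟨gy, hgyH, hgy⟩ := h0 y
    refine ⟨gy * gx⁻¹, mul_mem hgyH (inv_mem hgxH), ?_⟩
    have hx0 : gx⁻¹ x = 0 := by rw [← hgx]; exact gx.symm_apply_apply 0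
    rw [Equiv.Perm.mul_apply, hx0, hgy]
  · exact orbitSizes_eq_of_fn sigma1 c1 _ (hc_gen _ _ (by decide)) (by decide) (by decide)
  · exact orbitSizes_eq_of_fn sigma2 c2 _ (hc_gen _ _ (by decide)) (by decide) (by decide)
  · exact orbitSizes_eq_of_fn sigma3 c3 _ (hc_gen _ _ (by decide)) (by decide) (by decide)
end

section
/- There exist permutations σ₁, σ₂, σ₃ of {1, …, 28} such that σ₁ ∘ σ₂ ∘ σ₃ = id, the subgroup generated by σ₁, σ₂, σ₃ acts transitively on {1, …, 28}, and the multisets of orbit sizes of the cyclic groups generated by σ₁, σ₂, σ₃ are, respectively, {7,6,3,2,2,2,1,1,1,1,1,1}, {4,3,3,3,3,2,2,2,2,2,2}, and {19,4,3,1,1}. -/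
section Lemmas

open MulAction Function

variable {α : Type*} [Fintype α] [DecidableEq α]

lemma natCard_orbit_zpowers (σ : Equiv.Perm α) (x : α) :
    Nat.card (MulAction.orbit (Subgroup.zpowers σ) x) = Function.minimalPeriod (σ • ·) x := by
  classical
  letI : Fintype (MulAction.orbit (Subgroup.zpowers σ) x) := Fintype.ofFinite _
  rw [Nat.card_eq_fintype_card, ← MulAction.minimalPeriod_eq_card]

lemma minimalPeriod_eq_of {β : Type*} (f : β → β) (x : β) (n : ℕ) (h0 : 0 < n)
    (h : f^[n] x = x) (h2 : ∀ k, k < n → 0 < k → f^[k] x ≠ x) :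
    Function.minimalPeriod f x = n := by
  have hp : Function.IsPeriodicPt f n x := h
  have hle := hp.minimalPeriod_le h0
  rcases lt_or_eq_of_le hle with hlt | he
  · exact absurd (Function.isPeriodicPt_minimalPeriod f x)
      (h2 _ hlt (hp.minimalPeriod_pos h0))
  · exact he

lemma orbitSizes_bind (σ : Equiv.Perm α) :
    (orbitSizes σ).bind (fun k => Multiset.replicate k k)
      = (Finset.univ : Finset α).val.map (fun x => Function.minimalPeriod (σ • ·) x) := by
  classical
  letI : Fintype (MulAction.orbitRel.Quotient (Subgroup.zpowers σ) α) := Fintype.ofFinite _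
  set Q := MulAction.orbitRel.Quotient (Subgroup.zpowers σ) α with hQ
  set g : Q → ℕ := fun q => Nat.card (MulAction.orbitRel.Quotient.orbit q) with hg
  have horb : ∀ x : α, g (Quotient.mk'' x : Q) = Function.minimalPeriod (σ • ·) x := by
    intro x
    rw [hg]
    show Nat.card (MulAction.orbitRel.Quotient.orbit (Quotient.mk'' x : Q)) = _
    rw [MulAction.orbitRel.Quotient.orbit_mk, natCard_orbit_zpowers]
  have hKey : (Finset.univ : Finset α).val.map (fun x : α => (Quotient.mk'' x : Q))
      = (Finset.univ : Finset Q).val.bind (fun q => Multiset.replicate (g q) q) := by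
    ext q
    rw [Multiset.count_map, Multiset.count_bind]
    have h1 : (Multiset.filter (fun a => q = Quotient.mk'' a) (Finset.univ : Finset α).val)
        = Multiset.filter (fun a : α => Quotient.mk'' a = q) (Finset.univ : Finset α).val :=
      Multiset.filter_congr (fun x _ => eq_comm)
    rw [h1]
    have h2 : ((Finset.univ : Finset Q).val.map fun b =>
        Multiset.count q (Multiset.replicate (g b) b)).sum
        = ∑ b : Q, if q = b then g b else 0 := by
      apply congrArg
      apply Multiset.map_congr rfl
      intro b _
      rw [Multiset.count_replicate]
      simp [eq_comm]
    rw [h2, Finset.sum_ite_eq, if_pos (Finset.mem_univ q), hg]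
    have h3 : MulAction.orbitRel.Quotient.orbit q = {x : α | Quotient.mk'' x = q} := by
      ext x
      exact MulAction.orbitRel.Quotient.mem_orbit
    show Multiset.card _ = Nat.card (MulAction.orbitRel.Quotient.orbit q)
    rw [h3]
    rw [show {x : α | Quotient.mk'' x = q} = ((Finset.univ.filter
      (fun a : α => Quotient.mk'' a = q) : Finset α) : Set α) by ext x; simp]
    rw [Nat.card_coe_set_eq, Set.ncard_coe_finset]
    rfl
  have hos : orbitSizes σ = (Finset.univ : Finset Q).val.map g := by
    unfold orbitSizes
    congr!
  rw [hos, Multiset.bind_map]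
  have hrhs : (Finset.univ : Finset α).val.map (fun x => Function.minimalPeriod (σ • ·) x)
      = ((Finset.univ : Finset α).val.map (fun x : α => (Quotient.mk'' x : Q))).map g := by
    rw [Multiset.map_map]
    exact Multiset.map_congr rfl (fun x _ => (horb x).symm)
  rw [hrhs, hKey, Multiset.map_bind]
  apply congrArg
  funext q
  rw [Multiset.map_replicate]

lemma count_bind_replicate_s11 (k : ℕ) (M : Multiset ℕ) :
    Multiset.count k (M.bind fun a => Multiset.replicate a a) = k * Multiset.count k M := by
  induction M using Multiset.induction_on with
  | empty => simp
  | cons a M ih =>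
    rw [Multiset.cons_bind, Multiset.count_add, ih, Multiset.count_cons,
      Multiset.count_replicate]
    rcases eq_or_ne a k with rfl | h
    · simp [Nat.mul_add, Nat.add_comm]
    · simp [h, Ne.symm h]

lemma bind_replicate_inj (M N : Multiset ℕ) (hM : ∀ k ∈ M, 0 < k) (hN : ∀ k ∈ N, 0 < k)
    (h : M.bind (fun a => Multiset.replicate a a) = N.bind (fun a => Multiset.replicate a a)) :
    M = N := by
  ext k
  rcases Nat.eq_zero_or_pos k with rfl | hk
  · rw [Multiset.count_eq_zero_of_notMem (fun h0 => (hM 0 h0).false),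
      Multiset.count_eq_zero_of_notMem (fun h0 => (hN 0 h0).false)]
  · have := congrArg (Multiset.count k) h
    rw [count_bind_replicate_s11, count_bind_replicate_s11] at this
    exact Nat.eq_of_mul_eq_mul_left hk this

lemma orbitSizes_pos (σ : Equiv.Perm α) : ∀ k ∈ orbitSizes σ, 0 < k := by
  classical
  intro k hk
  letI : Fintype (MulAction.orbitRel.Quotient (Subgroup.zpowers σ) α) := Fintype.ofFinite _
  obtain ⟨q, -, rfl⟩ := Multiset.mem_map.1 hk
  haveI : Nonempty q.orbit := (MulAction.orbitRel.Quotient.nonempty_orbit q).to_subtype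
  haveI : Finite q.orbit := Set.toFinite _
  exact Nat.card_pos

lemma orbitSizes_eq_of_table (σ : Equiv.Perm α) (m : α → ℕ) (T : Multiset ℕ)
    (hT : ∀ k ∈ T, 0 < k)
    (hm : ∀ x : α, 0 < m x ∧ (⇑σ)^[m x] x = x ∧ ∀ k, k < m x → 0 < k → (⇑σ)^[k] x ≠ x)
    (hMT : T.bind (fun a => Multiset.replicate a a) = (Finset.univ : Finset α).val.map m) :
    orbitSizes σ = T := by
  apply bind_replicate_inj _ _ (orbitSizes_pos σ) hT
  rw [orbitSizes_bind, hMT]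
  apply Multiset.map_congr rfl
  intro x _
  have hs : (σ • ·) = ⇑σ := rfl
  rw [hs]
  exact minimalPeriod_eq_of _ _ _ (hm x).1 (hm x).2.1 (hm x).2.2

end Lemmas

def f1 : Fin 28 → Fin 28 := ![0, 6, 11, 17, 4, 2, 12, 18, 10, 21, 16, 20, 5, 19, 8, 15, 9, 3, 23, 13, 1, 14, 25, 7, 24, 22, 26, 27]
def g1 : Fin 28 → Fin 28 := ![0, 20, 5, 17, 4, 12, 1, 23, 14, 16, 8, 2, 6, 19, 21, 15, 10, 3, 7, 13, 11, 9, 25, 18, 24, 22, 26, 27]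
def f2 : Fin 28 → Fin 28 := ![17, 9, 5, 18, 21, 2, 23, 3, 10, 1, 25, 19, 22, 15, 27, 13, 20, 24, 7, 11, 26, 14, 12, 6, 0, 8, 16, 4]
def g2 : Fin 28 → Fin 28 := ![24, 9, 5, 7, 27, 2, 23, 18, 25, 1, 8, 19, 22, 15, 21, 13, 26, 0, 3, 11, 16, 4, 12, 6, 17, 10, 20, 14]
def f3 : Fin 28 → Fin 28 := ![24, 16, 2, 0, 27, 22, 9, 6, 21, 26, 25, 5, 23, 11, 4, 13, 8, 7, 18, 15, 19, 1, 10, 3, 17, 12, 20, 14]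
def g3 : Fin 28 → Fin 28 := ![3, 21, 2, 23, 14, 11, 7, 17, 16, 6, 22, 13, 25, 15, 27, 19, 1, 24, 18, 20, 26, 8, 5, 12, 0, 10, 9, 4]
def m1 : Fin 28 → ℕ := ![1, 7, 7, 2, 1, 7, 7, 3, 6, 6, 6, 7, 7, 2, 6, 1, 6, 2, 3, 2, 7, 6, 2, 3, 1, 2, 1, 1]
def m2 : Fin 28 → ℕ := ![3, 2, 2, 3, 4, 2, 2, 3, 3, 2, 3, 2, 2, 2, 4, 2, 3, 3, 3, 2, 3, 4, 2, 2, 3, 3, 3, 4]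
def m3 : Fin 28 → ℕ := ![19, 4, 1, 19, 3, 19, 19, 19, 4, 19, 19, 19, 19, 19, 3, 19, 4, 19, 1, 19, 19, 4, 19, 19, 19, 19, 19, 3]
def s1 : Equiv.Perm (Fin 28) := ⟨f1, g1, by decide, by decide⟩
def s2 : Equiv.Perm (Fin 28) := ⟨f2, g2, by decide, by decide⟩
def s3 : Equiv.Perm (Fin 28) := ⟨f3, g3, by decide, by decide⟩

theorem reach : ∀ y : Fin 28, ∃ g ∈ Subgroup.closure ({s1, s2, s3} : Set (Equiv.Perm (Fin 28))),
    g 0 = y := by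
  have ha : s1 ∈ Subgroup.closure ({s1, s2, s3} : Set (Equiv.Perm (Fin 28))) :=
    Subgroup.subset_closure (by simp)
  have hb : s2 ∈ Subgroup.closure ({s1, s2, s3} : Set (Equiv.Perm (Fin 28))) :=
    Subgroup.subset_closure (by simp)
  have hc : s3 ∈ Subgroup.closure ({s1, s2, s3} : Set (Equiv.Perm (Fin 28))) :=
    Subgroup.subset_closure (by simp)
  intro y
  fin_cases y
  · exact ⟨(1 : Equiv.Perm (Fin 28)), one_mem _, by decide⟩
  · exact ⟨s1⁻¹ * s3 * s3 * s2, (mul_mem (mul_mem (mul_mem (inv_mem ha) hc) hc) hb), by decide⟩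
  · exact ⟨s1 * s1 * s3⁻¹ * s3⁻¹ * s3⁻¹, (mul_mem (mul_mem (mul_mem (mul_mem ha ha) (inv_mem hc)) (inv_mem hc)) (inv_mem hc)), by decide⟩
  · exact ⟨s3⁻¹, (inv_mem hc), by decide⟩
  · exact ⟨s2⁻¹ * s1 * s3 * s3 * s3 * s2, (mul_mem (mul_mem (mul_mem (mul_mem (mul_mem (inv_mem hb) ha) hc) hc) hc) hb), by decide⟩
  · exact ⟨s1 * s3⁻¹ * s3⁻¹ * s3⁻¹, (mul_mem (mul_mem (mul_mem ha (inv_mem hc)) (inv_mem hc)) (inv_mem hc)), by decide⟩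
  · exact ⟨s3 * s3 * s2, (mul_mem (mul_mem hc hc) hb), by decide⟩
  · exact ⟨s3 * s2, (mul_mem hc hb), by decide⟩
  · exact ⟨s2 * s3⁻¹ * s3⁻¹ * s3⁻¹ * s3⁻¹, (mul_mem (mul_mem (mul_mem (mul_mem hb (inv_mem hc)) (inv_mem hc)) (inv_mem hc)) (inv_mem hc)), by decide⟩
  · exact ⟨s3 * s3 * s3 * s2, (mul_mem (mul_mem (mul_mem hc hc) hc) hb), by decide⟩
  · exact ⟨s3 * s2 * s3⁻¹ * s3⁻¹ * s3⁻¹, (mul_mem (mul_mem (mul_mem (mul_mem hc hb) (inv_mem hc)) (inv_mem hc)) (inv_mem hc)), by decide⟩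
  · exact ⟨s3⁻¹ * s1 * s3⁻¹ * s3⁻¹ * s3⁻¹, (mul_mem (mul_mem (mul_mem (mul_mem (inv_mem hc) ha) (inv_mem hc)) (inv_mem hc)) (inv_mem hc)), by decide⟩
  · exact ⟨s3⁻¹ * s3⁻¹ * s3⁻¹, (mul_mem (mul_mem (inv_mem hc) (inv_mem hc)) (inv_mem hc)), by decide⟩
  · exact ⟨s3⁻¹ * s3⁻¹ * s1 * s3⁻¹ * s3⁻¹ * s3⁻¹, (mul_mem (mul_mem (mul_mem (mul_mem (mul_mem (inv_mem hc) (inv_mem hc)) ha) (inv_mem hc)) (inv_mem hc)) (inv_mem hc)), by decide⟩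
  · exact ⟨s1 * s1 * s3 * s3 * s3 * s2, (mul_mem (mul_mem (mul_mem (mul_mem (mul_mem ha ha) hc) hc) hc) hb), by decide⟩
  · exact ⟨s3 * s3 * s1⁻¹ * s1⁻¹ * s3 * s3 * s2, (mul_mem (mul_mem (mul_mem (mul_mem (mul_mem (mul_mem hc hc) (inv_mem ha)) (inv_mem ha)) hc) hc) hb), by decide⟩
  · exact ⟨s1⁻¹ * s3 * s3 * s3 * s2, (mul_mem (mul_mem (mul_mem (mul_mem (inv_mem ha) hc) hc) hc) hb), by decide⟩
  · exact ⟨s2, hb, by decide⟩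
  · exact ⟨s2 * s3⁻¹, (mul_mem hb (inv_mem hc)), by decide⟩
  · exact ⟨s3 * s1⁻¹ * s1⁻¹ * s3 * s3 * s2, (mul_mem (mul_mem (mul_mem (mul_mem (mul_mem hc (inv_mem ha)) (inv_mem ha)) hc) hc) hb), by decide⟩
  · exact ⟨s1⁻¹ * s1⁻¹ * s3 * s3 * s2, (mul_mem (mul_mem (mul_mem (mul_mem (inv_mem ha) (inv_mem ha)) hc) hc) hb), by decide⟩
  · exact ⟨s1 * s3 * s3 * s3 * s2, (mul_mem (mul_mem (mul_mem (mul_mem ha hc) hc) hc) hb), by decide⟩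
  · exact ⟨s2 * s3⁻¹ * s3⁻¹ * s3⁻¹, (mul_mem (mul_mem (mul_mem hb (inv_mem hc)) (inv_mem hc)) (inv_mem hc)), by decide⟩
  · exact ⟨s3⁻¹ * s3⁻¹, (mul_mem (inv_mem hc) (inv_mem hc)), by decide⟩
  · exact ⟨s3, hc, by decide⟩
  · exact ⟨s3⁻¹ * s3⁻¹ * s3⁻¹ * s3⁻¹, (mul_mem (mul_mem (mul_mem (inv_mem hc) (inv_mem hc)) (inv_mem hc)) (inv_mem hc)), by decide⟩
  · exact ⟨s3 * s3 * s3 * s3 * s2, (mul_mem (mul_mem (mul_mem (mul_mem hc hc) hc) hc) hb), by decide⟩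
  · exact ⟨s2 * s1 * s1 * s3 * s3 * s3 * s2, (mul_mem (mul_mem (mul_mem (mul_mem (mul_mem (mul_mem hb ha) ha) hc) hc) hc) hb), by decide⟩
/-- Realizability of the degree-28 branch-data triple
`[7, 6, 3, 2, 2, 2, 1, 1, 1, 1, 1, 1]`, `[4, 3, 3, 3, 3, 2, 2, 2, 2, 2, 2]`, `[19, 4, 3, 1, 1]`
by a transitive permutation triple with product the identity. -/
theorem realizable_triple_11 :
    ∃ σ₁ σ₂ σ₃ : Equiv.Perm (Fin 28),
      σ₁ * σ₂ * σ₃ = 1 ∧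
      (∀ x y : Fin 28,
        ∃ g ∈ Subgroup.closure ({σ₁, σ₂, σ₃} : Set (Equiv.Perm (Fin 28))), g x = y) ∧
      orbitSizes σ₁ = ({7, 6, 3, 2, 2, 2, 1, 1, 1, 1, 1, 1} : Multiset ℕ) ∧
      orbitSizes σ₂ = ({4, 3, 3, 3, 3, 2, 2, 2, 2, 2, 2} : Multiset ℕ) ∧
      orbitSizes σ₃ = ({19, 4, 3, 1, 1} : Multiset ℕ) := by
  refine ⟨s1, s2, s3, ?_, ?_, ?_, ?_, ?_⟩
  · exact Equiv.ext (by decide)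
  · intro x y
    obtain ⟨gx, hgx, hgx0⟩ := reach x
    obtain ⟨gy, hgy, hgy0⟩ := reach y
    refine ⟨gy * gx⁻¹, mul_mem hgy (inv_mem hgx), ?_⟩
    have : gx⁻¹ x = 0 := by rw [← hgx0]; simp
    simp [Equiv.Perm.mul_apply, this, hgy0]
  · exact orbitSizes_eq_of_table s1 m1 _ (by decide) (by decide) (by decide)
  · exact orbitSizes_eq_of_table s2 m2 _ (by decide) (by decide) (by decide)
  · exact orbitSizes_eq_of_table s3 m3 _ (by decide) (by decide) (by decide)
end

section
/- There exist permutations σ₁, σ₂, σ₃ of {1, …, 28} such that σ₁ ∘ σ₂ ∘ σ₃ = id, the subgroup generated by σ₁, σ₂, σ₃ acts transitively on {1, …, 28}, and the multisets of orbit sizes of the cyclic groups generated by σ₁, σ₂, σ₃ are, respectively, {7,5,3,2,2,2,1,1,1,1,1,1,1}, {6,6,4,3,3,2,2,1,1}, and {18,4,4,2}. -/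
set_option linter.unusedSectionVars false

section General

variable {α : Type*} [Fintype α] [DecidableEq α]

lemma mem_orbit_zpowers_iff {σ : Equiv.Perm α} {x y : α} :
    y ∈ MulAction.orbit (Subgroup.zpowers σ) x ↔ σ.SameCycle x y := by
  constructor
  · rintro ⟨g, rfl⟩
    obtain ⟨k, hk⟩ := Subgroup.mem_zpowers_iff.mp g.2
    exact ⟨k, by rw [hk]; rfl⟩
  · rintro ⟨k, hk⟩
    exact ⟨⟨σ ^ k, Subgroup.zpow_mem _ (Subgroup.mem_zpowers σ) k⟩, hk⟩

lemma card_orbit_zpowers (σ : Equiv.Perm α) (x : α) :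
    Nat.card (MulAction.orbit (Subgroup.zpowers σ) x) = Function.minimalPeriod ⇑σ x := by
  rw [Nat.card_congr (MulAction.orbitZPowersEquiv σ x), Nat.card_zmod]
  rfl

lemma minimalPeriod_perm_eq {σ : Equiv.Perm α} {x : α} {n : ℕ} (h0 : 0 < n)
    (h1 : (σ ^ n) x = x) (h2 : ∀ m < n, 0 < m → (σ ^ m) x ≠ x) :
    Function.minimalPeriod ⇑σ x = n := by
  have hp : Function.IsPeriodicPt ⇑σ n x := by
    rw [Function.IsPeriodicPt, Function.IsFixedPt, Equiv.Perm.iterate_eq_pow]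
    exact h1
  refine le_antisymm (Function.IsPeriodicPt.minimalPeriod_le h0 hp) ?_
  by_contra hlt
  push_neg at hlt
  have hper := Function.isPeriodicPt_minimalPeriod ⇑σ x
  rw [Function.IsPeriodicPt, Function.IsFixedPt, Equiv.Perm.iterate_eq_pow] at hper
  exact h2 _ hlt (Function.IsPeriodicPt.minimalPeriod_pos h0 hp) hper

lemma sameCycle_const_of_invariant {σ : Equiv.Perm α} (c : α → ℕ)
    (hc : ∀ z, c (σ z) = c z) {x y : α} (h : σ.SameCycle x y) : c y = c x := by
  have key : ∀ (i : ℕ) (x : α), c ((σ ^ i) x) = c x := by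
    intro i
    induction i with
    | zero => intro x; simp
    | succ n ih => intro x; rw [pow_succ, Equiv.Perm.mul_apply, ih (σ x), hc]
  obtain ⟨i, -, -, rfl⟩ := h.exists_pow_eq''
  exact key i x

lemma quot_mk_eq_iff (σ : Equiv.Perm α) (a b : α) :
    (Quotient.mk'' a : MulAction.orbitRel.Quotient (Subgroup.zpowers σ) α) = Quotient.mk'' b
      ↔ σ.SameCycle a b := by
  rw [Quotient.eq'']
  exact Iff.trans mem_orbit_zpowers_iff Equiv.Perm.sameCycle_comm

lemma orbitSizes_eq_of_reps (σ : Equiv.Perm α) (l : List α)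
    (hcover : ∀ x : α, ∃ r ∈ l, σ.SameCycle r x)
    (hdisj : l.Pairwise fun a b => ¬ σ.SameCycle a b) :
    orbitSizes σ = ↑(l.map fun r => Function.minimalPeriod ⇑σ r) := by
  set Q := MulAction.orbitRel.Quotient (Subgroup.zpowers σ) α with hQdef
  have nd : (l.map (Quotient.mk'' : α → Q)).Nodup :=
    List.Pairwise.map _ (fun {a b} h => fun he => h ((quot_mk_eq_iff σ a b).mp he)) hdisj
  have hF : ∀ (inst : Fintype Q), (@Finset.univ Q inst).val = ↑(l.map (Quotient.mk'' : α → Q)) := by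
    intro inst
    have : (⟨↑(l.map (Quotient.mk'' : α → Q)), Multiset.coe_nodup.mpr nd⟩ : Finset Q) = @Finset.univ Q inst := by
      rw [@Finset.eq_univ_iff_forall Q inst]
      intro q
      induction q using Quotient.inductionOn' with
      | h x =>
        obtain ⟨r, hr, hrx⟩ := hcover x
        simp only [Finset.mem_mk, Multiset.mem_coe, List.mem_map]
        exact ⟨r, hr, (quot_mk_eq_iff σ r x).mpr hrx⟩
    rw [← this]
  show ((@Finset.univ Q (Fintype.ofFinite Q)).val.map fun q : Q => Nat.card q.orbit) = _
  rw [hF]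
  rw [Multiset.map_coe, List.map_map]
  congr 1
  refine List.map_congr_left fun r _ => ?_
  show Nat.card (MulAction.orbitRel.Quotient.orbit (Quotient.mk'' r)) = _
  rw [MulAction.orbitRel.Quotient.orbit_mk, card_orbit_zpowers]

end General

def fp1 : Fin 28 → Fin 28 := ![15, 20, 14, 3, 0, 23, 27, 9, 8, 19, 10, 11, 12, 1, 2, 6, 17, 16, 26, 7, 21, 25, 22, 5, 24, 13, 4, 18]

def gp1 : Fin 28 → Fin 28 := ![4, 13, 14, 3, 26, 23, 15, 19, 8, 7, 10, 11, 12, 25, 2, 0, 17, 16, 27, 9, 1, 20, 22, 5, 24, 21, 18, 6]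

def p1 : Equiv.Perm (Fin 28) := ⟨fp1, gp1, fun x => by revert x; decide, fun x => by revert x; decide⟩



def fp2 : Fin 28 → Fin 28 := ![13, 1, 12, 22, 11, 15, 5, 4, 18, 19, 21, 7, 3, 0, 24, 25, 6, 9, 20, 17, 14, 10, 2, 8, 23, 27, 26, 16]

def gp2 : Fin 28 → Fin 28 := ![13, 1, 22, 12, 7, 6, 16, 11, 23, 17, 21, 4, 2, 0, 20, 5, 27, 19, 8, 9, 18, 10, 3, 24, 14, 15, 26, 25]

def p2 : Equiv.Perm (Fin 28) := ⟨fp2, gp2, fun x => by revert x; decide, fun x => by revert x; decide⟩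



def fp3 : Fin 28 → Fin 28 := ![7, 0, 20, 12, 26, 24, 5, 9, 23, 11, 21, 4, 2, 15, 22, 13, 19, 27, 25, 17, 1, 18, 3, 6, 14, 10, 8, 16]

def gp3 : Fin 28 → Fin 28 := ![1, 20, 12, 22, 11, 6, 23, 0, 26, 7, 25, 9, 3, 15, 24, 13, 27, 19, 21, 16, 2, 10, 14, 8, 5, 18, 4, 17]

def p3 : Equiv.Perm (Fin 28) := ⟨fp3, gp3, fun x => by revert x; decide, fun x => by revert x; decide⟩



def repsp1 : List (Fin 28) := [0, 1, 7, 2, 5, 16, 3, 8, 10, 11, 12, 22, 24]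
def cp1 : Fin 28 → ℕ := ![0, 1, 3, 6, 0, 4, 0, 2, 7, 2, 8, 9, 10, 1, 3, 0, 5, 5, 0, 2, 1, 1, 11, 4, 12, 1, 0, 0]
lemma hosp1 : orbitSizes p1 = ({7, 5, 3, 2, 2, 2, 1, 1, 1, 1, 1, 1, 1} : Multiset ℕ) := by
  have hcov : ∀ x : Fin 28, ∃ r ∈ repsp1, ∃ k : Fin 19, (p1 ^ (k : ℕ)) r = x := by set_option maxRecDepth 100000 in decide
  have hinv : ∀ z : Fin 28, cp1 (p1 z) = cp1 z := by decide
  have hpw : repsp1.Pairwise (fun a b => cp1 a ≠ cp1 b) := by decide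
  rw [orbitSizes_eq_of_reps p1 repsp1
      (fun x => by
        obtain ⟨r, hr, k, hk⟩ := hcov x
        exact ⟨r, hr, ((k : ℕ) : ℤ), by rw [zpow_natCast]; exact hk⟩)
      (hpw.imp fun {a b} h hsc => h (sameCycle_const_of_invariant cp1 hinv hsc).symm)]
  have e0 : Function.minimalPeriod ⇑p1 (0 : Fin 28) = 7 :=
    minimalPeriod_perm_eq (by norm_num) (by decide) (by decide)
  have e1 : Function.minimalPeriod ⇑p1 (1 : Fin 28) = 5 :=
    minimalPeriod_perm_eq (by norm_num) (by decide) (by decide)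
  have e2 : Function.minimalPeriod ⇑p1 (7 : Fin 28) = 3 :=
    minimalPeriod_perm_eq (by norm_num) (by decide) (by decide)
  have e3 : Function.minimalPeriod ⇑p1 (2 : Fin 28) = 2 :=
    minimalPeriod_perm_eq (by norm_num) (by decide) (by decide)
  have e4 : Function.minimalPeriod ⇑p1 (5 : Fin 28) = 2 :=
    minimalPeriod_perm_eq (by norm_num) (by decide) (by decide)
  have e5 : Function.minimalPeriod ⇑p1 (16 : Fin 28) = 2 :=
    minimalPeriod_perm_eq (by norm_num) (by decide) (by decide)
  have e6 : Function.minimalPeriod ⇑p1 (3 : Fin 28) = 1 :=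
    minimalPeriod_perm_eq (by norm_num) (by decide) (by decide)
  have e7 : Function.minimalPeriod ⇑p1 (8 : Fin 28) = 1 :=
    minimalPeriod_perm_eq (by norm_num) (by decide) (by decide)
  have e8 : Function.minimalPeriod ⇑p1 (10 : Fin 28) = 1 :=
    minimalPeriod_perm_eq (by norm_num) (by decide) (by decide)
  have e9 : Function.minimalPeriod ⇑p1 (11 : Fin 28) = 1 :=
    minimalPeriod_perm_eq (by norm_num) (by decide) (by decide)
  have e10 : Function.minimalPeriod ⇑p1 (12 : Fin 28) = 1 :=
    minimalPeriod_perm_eq (by norm_num) (by decide) (by decide)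
  have e11 : Function.minimalPeriod ⇑p1 (22 : Fin 28) = 1 :=
    minimalPeriod_perm_eq (by norm_num) (by decide) (by decide)
  have e12 : Function.minimalPeriod ⇑p1 (24 : Fin 28) = 1 :=
    minimalPeriod_perm_eq (by norm_num) (by decide) (by decide)
  simp only [repsp1, List.map_cons, List.map_nil, e0, e1, e2, e3, e4, e5, e6, e7, e8, e9, e10, e11, e12]
  rfl

def repsp2 : List (Fin 28) := [5, 8, 2, 4, 9, 0, 10, 1, 26]
def cp2 : Fin 28 → ℕ := ![5, 7, 2, 2, 3, 0, 0, 3, 1, 4, 6, 3, 2, 5, 1, 0, 0, 4, 1, 4, 1, 6, 2, 1, 1, 0, 8, 0]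
lemma hosp2 : orbitSizes p2 = ({6, 6, 4, 3, 3, 2, 2, 1, 1} : Multiset ℕ) := by
  have hcov : ∀ x : Fin 28, ∃ r ∈ repsp2, ∃ k : Fin 19, (p2 ^ (k : ℕ)) r = x := by set_option maxRecDepth 100000 in decide
  have hinv : ∀ z : Fin 28, cp2 (p2 z) = cp2 z := by decide
  have hpw : repsp2.Pairwise (fun a b => cp2 a ≠ cp2 b) := by decide
  rw [orbitSizes_eq_of_reps p2 repsp2
      (fun x => by
        obtain ⟨r, hr, k, hk⟩ := hcov x
        exact ⟨r, hr, ((k : ℕ) : ℤ), by rw [zpow_natCast]; exact hk⟩)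
      (hpw.imp fun {a b} h hsc => h (sameCycle_const_of_invariant cp2 hinv hsc).symm)]
  have e0 : Function.minimalPeriod ⇑p2 (5 : Fin 28) = 6 :=
    minimalPeriod_perm_eq (by norm_num) (by decide) (by decide)
  have e1 : Function.minimalPeriod ⇑p2 (8 : Fin 28) = 6 :=
    minimalPeriod_perm_eq (by norm_num) (by decide) (by decide)
  have e2 : Function.minimalPeriod ⇑p2 (2 : Fin 28) = 4 :=
    minimalPeriod_perm_eq (by norm_num) (by decide) (by decide)
  have e3 : Function.minimalPeriod ⇑p2 (4 : Fin 28) = 3 :=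
    minimalPeriod_perm_eq (by norm_num) (by decide) (by decide)
  have e4 : Function.minimalPeriod ⇑p2 (9 : Fin 28) = 3 :=
    minimalPeriod_perm_eq (by norm_num) (by decide) (by decide)
  have e5 : Function.minimalPeriod ⇑p2 (0 : Fin 28) = 2 :=
    minimalPeriod_perm_eq (by norm_num) (by decide) (by decide)
  have e6 : Function.minimalPeriod ⇑p2 (10 : Fin 28) = 2 :=
    minimalPeriod_perm_eq (by norm_num) (by decide) (by decide)
  have e7 : Function.minimalPeriod ⇑p2 (1 : Fin 28) = 1 :=
    minimalPeriod_perm_eq (by norm_num) (by decide) (by decide)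
  have e8 : Function.minimalPeriod ⇑p2 (26 : Fin 28) = 1 :=
    minimalPeriod_perm_eq (by norm_num) (by decide) (by decide)
  simp only [repsp2, List.map_cons, List.map_nil, e0, e1, e2, e3, e4, e5, e6, e7, e8]
  rfl

def repsp3 : List (Fin 28) := [0, 10, 16, 13]
def cp3 : Fin 28 → ℕ := ![0, 0, 0, 0, 0, 0, 0, 0, 0, 0, 1, 0, 0, 3, 0, 3, 2, 2, 1, 2, 0, 1, 0, 0, 0, 1, 0, 2]
lemma hosp3 : orbitSizes p3 = ({18, 4, 4, 2} : Multiset ℕ) := by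
  have hcov : ∀ x : Fin 28, ∃ r ∈ repsp3, ∃ k : Fin 19, (p3 ^ (k : ℕ)) r = x := by set_option maxRecDepth 100000 in decide
  have hinv : ∀ z : Fin 28, cp3 (p3 z) = cp3 z := by decide
  have hpw : repsp3.Pairwise (fun a b => cp3 a ≠ cp3 b) := by decide
  rw [orbitSizes_eq_of_reps p3 repsp3
      (fun x => by
        obtain ⟨r, hr, k, hk⟩ := hcov x
        exact ⟨r, hr, ((k : ℕ) : ℤ), by rw [zpow_natCast]; exact hk⟩)
      (hpw.imp fun {a b} h hsc => h (sameCycle_const_of_invariant cp3 hinv hsc).symm)]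
  have e0 : Function.minimalPeriod ⇑p3 (0 : Fin 28) = 18 :=
    minimalPeriod_perm_eq (by norm_num) (by decide) (by decide)
  have e1 : Function.minimalPeriod ⇑p3 (10 : Fin 28) = 4 :=
    minimalPeriod_perm_eq (by norm_num) (by decide) (by decide)
  have e2 : Function.minimalPeriod ⇑p3 (16 : Fin 28) = 4 :=
    minimalPeriod_perm_eq (by norm_num) (by decide) (by decide)
  have e3 : Function.minimalPeriod ⇑p3 (13 : Fin 28) = 2 :=
    minimalPeriod_perm_eq (by norm_num) (by decide) (by decide)
  simp only [repsp3, List.map_cons, List.map_nil, e0, e1, e2, e3]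
  rfl

lemma trans_p : ∀ x : Fin 28, ∃ g ∈ Subgroup.closure ({p1, p2, p3} : Set (Equiv.Perm (Fin 28))), g 0 = x := by
  have m1 : p1 ∈ ({p1, p2, p3} : Set (Equiv.Perm (Fin 28))) := by simp
  have m2 : p2 ∈ ({p1, p2, p3} : Set (Equiv.Perm (Fin 28))) := by simp
  set P : Fin 28 → Prop := fun x => ∃ g ∈ Subgroup.closure ({p1, p2, p3} : Set (Equiv.Perm (Fin 28))), g 0 = x with hP
  have st1 : ∀ x y : Fin 28, p1 x = y → P x → P y := by
    rintro x y rfl ⟨g, hg, h0⟩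
    exact ⟨p1 * g, mul_mem (Subgroup.subset_closure m1) hg, by rw [Equiv.Perm.mul_apply, h0]⟩
  have st2 : ∀ x y : Fin 28, p2 x = y → P x → P y := by
    rintro x y rfl ⟨g, hg, h0⟩
    exact ⟨p2 * g, mul_mem (Subgroup.subset_closure m2) hg, by rw [Equiv.Perm.mul_apply, h0]⟩
  have h0 : P 0 := ⟨1, one_mem _, rfl⟩
  have h15 : P 15 := st1 0 15 (by decide) h0
  have h13 : P 13 := st2 0 13 (by decide) h0
  have h6 : P 6 := st1 15 6 (by decide) h15
  have h25 : P 25 := st2 15 25 (by decide) h15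
  have h1 : P 1 := st1 13 1 (by decide) h13
  have h27 : P 27 := st1 6 27 (by decide) h6
  have h5 : P 5 := st2 6 5 (by decide) h6
  have h20 : P 20 := st1 1 20 (by decide) h1
  have h18 : P 18 := st1 27 18 (by decide) h27
  have h16 : P 16 := st2 27 16 (by decide) h27
  have h23 : P 23 := st1 5 23 (by decide) h5
  have h21 : P 21 := st1 20 21 (by decide) h20
  have h14 : P 14 := st2 20 14 (by decide) h20
  have h26 : P 26 := st1 18 26 (by decide) h18
  have h17 : P 17 := st1 16 17 (by decide) h16
  have h8 : P 8 := st2 23 8 (by decide) h23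
  have h10 : P 10 := st2 21 10 (by decide) h21
  have h2 : P 2 := st1 14 2 (by decide) h14
  have h24 : P 24 := st2 14 24 (by decide) h14
  have h4 : P 4 := st1 26 4 (by decide) h26
  have h9 : P 9 := st2 17 9 (by decide) h17
  have h12 : P 12 := st2 2 12 (by decide) h2
  have h11 : P 11 := st2 4 11 (by decide) h4
  have h19 : P 19 := st1 9 19 (by decide) h9
  have h3 : P 3 := st2 12 3 (by decide) h12
  have h7 : P 7 := st2 11 7 (by decide) h11
  have h22 : P 22 := st2 3 22 (by decide) h3
  intro x
  fin_cases x <;> assumption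

/-- Realizability of the degree-28 branch-data triple
`[7, 5, 3, 2, 2, 2, 1, 1, 1, 1, 1, 1, 1]`, `[6, 6, 4, 3, 3, 2, 2, 1, 1]`, `[18, 4, 4, 2]`
by a transitive permutation triple with product the identity. -/
theorem realizable_triple_12 :
    ∃ σ₁ σ₂ σ₃ : Equiv.Perm (Fin 28),
      σ₁ * σ₂ * σ₃ = 1 ∧
      (∀ x y : Fin 28,
        ∃ g ∈ Subgroup.closure ({σ₁, σ₂, σ₃} : Set (Equiv.Perm (Fin 28))), g x = y) ∧
      orbitSizes σ₁ = ({7, 5, 3, 2, 2, 2, 1, 1, 1, 1, 1, 1, 1} : Multiset ℕ) ∧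
      orbitSizes σ₂ = ({6, 6, 4, 3, 3, 2, 2, 1, 1} : Multiset ℕ) ∧
      orbitSizes σ₃ = ({18, 4, 4, 2} : Multiset ℕ) := by
  refine ⟨p1, p2, p3, ?_, ?_, hosp1, hosp2, hosp3⟩
  · apply Equiv.ext
    decide
  · intro x y
    obtain ⟨gx, hgx, hx⟩ := trans_p x
    obtain ⟨gy, hgy, hy⟩ := trans_p y
    refine ⟨gy * gx⁻¹, mul_mem hgy (inv_mem hgx), ?_⟩
    rw [Equiv.Perm.mul_apply, ← hx, Equiv.Perm.coe_inv, Equiv.symm_apply_apply, hy]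
end
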